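/- If α, β ∈ X are Lipschitz with Lipschitz constant m (i.e. |α(s) − α(t)| ≤ m|s − t| and |β(s) − β(t)| ≤ m|s − t| for all s, t ∈ I), then α # β is Lipschitz with Lipschitz constant m². -/

import Mathlib

open scoped BigOperators

noncomputable section

attribute [local instance] Classical.propDecidable

/-- `I`: the set of dyadic rationals in `[0,1]`. -/
def dyadicI : Set ℚ := {t | 0 ≤ t ∧ t ≤ 1 ∧ ∃ i n : ℕ, t = (i : ℚ) / 2 ^ n}

/-- `X` is the ℚ-vector space of functions `I → ℚ`. -/
abbrev X : Type := dyadicI → ℚ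

lemma dyadicI_mem {i n : ℕ} (h : i ≤ 2 ^ n) : (i : ℚ) / 2 ^ n ∈ dyadicI := by
  refine ⟨by positivity, ?_, i, n, rfl⟩
  rw [div_le_one (by positivity)]
  exact_mod_cast h

lemma zero_mem_dyadicI : (0 : ℚ) ∈ dyadicI := by
  simpa using dyadicI_mem (i := 0) (n := 0) (by norm_num)

lemma one_mem_dyadicI : (1 : ℚ) ∈ dyadicI := by
  simpa using dyadicI_mem (i := 1) (n := 0) (by norm_num)

lemma half_mem_dyadicI : (1 / 2 : ℚ) ∈ dyadicI := by
  have := dyadicI_mem (i := 1) (n := 1) (by norm_num)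
  norm_num at this ⊢
  exact this

/-- Evaluation of `α : X` at a rational, extended by `0` off `I`. -/
def evI (α : X) (t : ℚ) : ℚ := if h : t ∈ dyadicI then α ⟨t, h⟩ else 0

/-- The map `T₀ : X → X`, `(T₀ α)(t) = α (t/2)`. -/
def T0 (α : X) : X := fun t => evI α (t.1 / 2)

/-- The map `T₁ : X → X`, `(T₁ α)(t) = α ((1+t)/2)`. -/
def T1 (α : X) : X := fun t => evI α ((1 + t.1) / 2)

/-- Auxiliary recursion (on the exponent of the denominator) defining `α # β`. -/
def hashAux : ℕ → X → X → ℚ → ℚ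
  | 0, α, β, t =>
      if t = 0 then 0 else (evI α 1 - evI α 0) * (evI β 1 - evI β 0)
  | n + 1, α, β, t =>
      if t ≤ 1 / 2 then
        hashAux n (T0 α) (T0 β) (2 * t) + hashAux n (T1 α) (T1 β) (2 * t)
      else
        hashAux n (T0 α) (T0 β) 1 + hashAux n (T1 α) (T1 β) 1 +
          hashAux n (T0 α) (T1 β) (2 * t - 1) + hashAux n (T1 α) (T0 β) (2 * t - 1)

/-- The product `α # β` on `X`. -/
def hash (α β : X) : X := fun t => hashAux (padicValNat 2 t.1.den) α β t.1

/-- The element `t ↦ t` of `X`. -/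
def tId : X := fun t => t.1

/-- The element `ε : t ↦ t − t²` of `X`. -/
def epsX : X := fun t => t.1 - t.1 ^ 2

/-- The constant function `1` in `X`. -/
def oneX : X := fun _ => (1 : ℚ)

/-- Convexity: `2α(i/q) ≥ α((i−1)/q) + α((i+1)/q)` for all powers of two `q = 2^n`, `0 < i < q`. -/
def ConvexX (α : X) : Prop :=
  ∀ n i : ℕ, 0 < i → i < 2 ^ n →
    evI α (((i : ℚ) - 1) / 2 ^ n) + evI α (((i : ℚ) + 1) / 2 ^ n)
      ≤ 2 * evI α ((i : ℚ) / 2 ^ n)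

/-- `α` is Lipschitz with constant `m`. -/
def LipschitzQ (m : ℚ) (α : X) : Prop :=
  ∀ s t : dyadicI, |α s - α t| ≤ m * |s.1 - t.1|

/-- The point `2^{-n}` of `I`. -/
def invPow (n : ℕ) : dyadicI :=
  ⟨1 / 2 ^ n, by simpa using dyadicI_mem (i := 1) (n := n) Nat.one_le_two_pow⟩

/-- `μ` is the Hilbert–Kunz multiplicity of `α`, i.e. `μ = lim 2^n α(2^{-n})`. -/
def IsHKmu (α : X) (μ : ℝ) : Prop :=
  Filter.Tendsto (fun n : ℕ => ((2 ^ n * α (invPow n) : ℚ) : ℝ)) Filter.atTop (nhds μ)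

/-- The series `S_α = Σ α(2^{-n}) (2w)^n = Σ (2^n α(2^{-n})) w^n`. -/
def hkSeries (α : X) : PowerSeries ℚ := PowerSeries.mk fun n => 2 ^ n * α (invPow n)

/-- Auxiliary recursion defining the functions `φ_m`. -/
def phiAux : ℕ → ℕ → ℚ → ℚ
  | 0, _, _ => 0
  | n + 1, m, t =>
      if t ≤ 1 / 2 then
        if m % 2 = 0 then (phiAux n (m + 1) (2 * t) + (8 * (m : ℚ) + 6) * t) / 8
        else (phiAux n (m - 1) (2 * t) + ((2 * t) - (2 * t) ^ 2) + (8 * (m : ℚ) + 6) * t) / 8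
      else
        if m = 0 then (phiAux n 0 (2 * t - 1) + 6 * (1 - t)) / 8
        else if m % 2 = 0 then
          (phiAux n (m - 1) (2 * t - 1) + ((2 * t - 1) - (2 * t - 1) ^ 2)
            + (8 * (m : ℚ) + 6) * (1 - t)) / 8
        else (phiAux n (m + 1) (2 * t - 1) + (8 * (m : ℚ) + 6) * (1 - t)) / 8

/-- The functions `φ_m ∈ X` of Definition 2.2. -/
def phiM (m : ℕ) : X := fun t => phiAux (padicValNat 2 t.1.den) m t.1

/-- `ℕ` with the Nim-sum (bitwise XOR) as its (commutative) monoid operation. -/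
def NimNat : Type := ℕ

instance : CommMonoid NimNat where
  mul a b := Nat.xor a b
  one := (0 : ℕ)
  mul_assoc := Nat.xor_assoc
  mul_comm := Nat.xor_comm
  one_mul := Nat.zero_xor
  mul_one := Nat.xor_zero

/-- The ring `Γ`: free `ℤ`-module on `λ₀, λ₁, …` with `λᵢλⱼ = λ_{i XOR j}`. -/
abbrev GammaZ : Type := MonoidAlgebra ℤ NimNat

/-- The ring `Γ_Q = Γ ⊗ ℚ`. -/
abbrev GammaQ : Type := MonoidAlgebra ℚ NimNat

/-- The basis element `λᵢ` of `Γ`. -/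
def lamZ (i : ℕ) : GammaZ := MonoidAlgebra.single (show NimNat from i) 1

/-- The basis element `λᵢ` of `Γ_Q`. -/
def lamQ (i : ℕ) : GammaQ := MonoidAlgebra.single (show NimNat from i) 1

/-- `δ_r = λ₀ − λ₁ + ⋯ + (−1)^{r−1} λ_{r−1}` in `Γ`. -/
def deltaZ (r : ℕ) : GammaZ := ∑ i ∈ Finset.range r, ((-1 : ℤ) ^ i) • lamZ i

/-- `δ_r` in `Γ_Q`. -/
def deltaQ (r : ℕ) : GammaQ := ∑ i ∈ Finset.range r, ((-1 : ℚ) ^ i) • lamQ i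

/-- `L_n(α) = Σ_{i=0}^{2^n−1} (α((i+1)/2^n) − α(i/2^n)) (−1)^i λᵢ ∈ Γ_Q`. -/
def Ln (n : ℕ) (α : X) : GammaQ :=
  ∑ i ∈ Finset.range (2 ^ n),
    ((-1 : ℚ) ^ i * (evI α (((i : ℚ) + 1) / 2 ^ n) - evI α ((i : ℚ) / 2 ^ n))) • lamQ i

/-- The Hilbert–Kunz function `φ_f ∈ X` of a power series `f`:
`φ_f(i/q) = q^{-r} · dim_F F[[u₁,…,u_r]]/(u₁^q,…,u_r^q,f^i)`. -/
def phiF {F : Type} [Field F] {σ : Type} (f : MvPowerSeries σ F) : X := fun t =>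
  ((Module.finrank F
      (MvPowerSeries σ F ⧸ Ideal.span
        (Set.range (fun j : σ => (MvPowerSeries.X j : MvPowerSeries σ F) ^ t.1.den)
          ∪ {f ^ t.1.num.toNat}))) : ℚ)
    / (t.1.den : ℚ) ^ (Nat.card σ)

/-- The natural inclusion `F[[u_j : j ∈ σ]] → F[[u_j : j ∈ τ]]` along an injection `e : σ → τ`. -/
def embPS {F : Type} [Field F] {σ τ : Type} (e : σ → τ) (f : MvPowerSeries σ F) :
    MvPowerSeries τ F := fun d =>
  if h : ∃ d' : σ →₀ ℕ, Finsupp.mapDomain e d' = d then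
    MvPowerSeries.coeff h.choose f
  else 0


def gridPt (n : ℕ) (s : ℚ) : Prop := ∃ i : ℕ, i ≤ 2 ^ n ∧ s = (i : ℚ) / 2 ^ n

lemma gridPt_zero (n : ℕ) : gridPt n 0 := ⟨0, by positivity, by simp⟩

lemma gridPt_one (n : ℕ) : gridPt n 1 := ⟨2 ^ n, le_refl _, by
  push_cast
  rw [div_self (by positivity)]⟩

lemma gridPt_half (n : ℕ) : gridPt (n + 1) (1 / 2) := ⟨2 ^ n, by
    exact Nat.pow_le_pow_right (by norm_num) (Nat.le_succ n), by
  push_cast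
  rw [pow_succ]
  rw [div_eq_div_iff (by positivity) (by norm_num)]
  ring⟩

lemma gridPt_double {n : ℕ} {s : ℚ} (h : gridPt (n + 1) s) (hs : s ≤ 1 / 2) :
    gridPt n (2 * s) := by
  obtain ⟨i, hi, rfl⟩ := h
  have h2 : (0:ℚ) < 2 ^ (n+1) := by positivity
  have hiq : (i : ℚ) ≤ 2 ^ n := by
    rw [div_le_div_iff₀ h2 (by norm_num), pow_succ] at hs
    linarith
  refine ⟨i, by exact_mod_cast hiq, ?_⟩
  rw [pow_succ]
  field_simp

lemma gridPt_double' {n : ℕ} {s : ℚ} (h : gridPt (n + 1) s) (hs : ¬ s ≤ 1 / 2) :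
    gridPt n (2 * s - 1) := by
  obtain ⟨i, hi, rfl⟩ := h
  push_neg at hs
  have h2 : (0:ℚ) < 2 ^ (n+1) := by positivity
  have hiq : (2:ℚ) ^ n ≤ i := by
    rw [div_lt_div_iff₀ (by norm_num) h2, pow_succ] at hs
    linarith
  have hin : 2 ^ n ≤ i := by exact_mod_cast hiq
  refine ⟨i - 2 ^ n, ?_, ?_⟩
  · have : i ≤ 2 ^ n + 2 ^ n := by
      have := hi; rw [pow_succ] at this; omega
    omega
  · have : ((i - 2 ^ n : ℕ) : ℚ) = (i : ℚ) - 2 ^ n := by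
      push_cast [hin]; ring
    rw [this, pow_succ]
    field_simp

lemma gridPt_mono {k n : ℕ} (h : k ≤ n) {s : ℚ} (hs : gridPt k s) : gridPt n s := by
  obtain ⟨i, hi, rfl⟩ := hs
  obtain ⟨d, rfl⟩ := Nat.exists_eq_add_of_le h
  refine ⟨i * 2 ^ d, ?_, ?_⟩
  · rw [pow_add]; exact Nat.mul_le_mul_right _ hi
  · push_cast
    rw [pow_add]
    field_simp

lemma gridPt_nonneg {n : ℕ} {s : ℚ} (h : gridPt n s) : 0 ≤ s := by
  obtain ⟨i, hi, rfl⟩ := h; positivity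

lemma gridPt_le_one {n : ℕ} {s : ℚ} (h : gridPt n s) : s ≤ 1 := by
  obtain ⟨i, hi, rfl⟩ := h
  rw [div_le_one (by positivity)]
  exact_mod_cast hi

lemma hashAux_zero_def (α β : X) (t : ℚ) : hashAux 0 α β t =
    if t = 0 then 0 else (evI α 1 - evI α 0) * (evI β 1 - evI β 0) := rfl

lemma hashAux_succ_def (n : ℕ) (α β : X) (t : ℚ) : hashAux (n + 1) α β t =
    if t ≤ 1 / 2 then
      hashAux n (T0 α) (T0 β) (2 * t) + hashAux n (T1 α) (T1 β) (2 * t)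
    else
      hashAux n (T0 α) (T0 β) 1 + hashAux n (T1 α) (T1 β) 1 +
        hashAux n (T0 α) (T1 β) (2 * t - 1) + hashAux n (T1 α) (T0 β) (2 * t - 1) := rfl

lemma hashAux_at_zero : ∀ (n : ℕ) (α β : X), hashAux n α β 0 = 0 := by
  intro n
  induction n with
  | zero => intro α β; simp [hashAux_zero_def]
  | succ n IH => intro α β
                 rw [hashAux_succ_def, if_pos (by norm_num)]
                 norm_num [IH]

lemma half_mem {s : ℚ} (h : s ∈ dyadicI) : s / 2 ∈ dyadicI := by
  obtain ⟨h0, h1, i, n, rfl⟩ := h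
  refine ⟨by positivity, by linarith, i, n + 1, ?_⟩
  rw [pow_succ]
  field_simp

lemma half_mem' {s : ℚ} (h : s ∈ dyadicI) : (1 + s) / 2 ∈ dyadicI := by
  obtain ⟨h0, h1, i, n, rfl⟩ := h
  refine ⟨by positivity, by linarith, 2 ^ n + i, n + 1, ?_⟩
  have h2 : (2:ℚ) ^ n ≠ 0 := by positivity
  push_cast
  rw [show (1:ℚ) + (i:ℚ) / 2 ^ n = ((2:ℚ) ^ n + i) / 2 ^ n by field_simp, div_div, pow_succ]

lemma evI_T0 (α : X) {s : ℚ} (hs : s ∈ dyadicI) : evI (T0 α) s = evI α (s / 2) := by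
  rw [evI, dif_pos hs]; rfl

lemma evI_T1 (α : X) {s : ℚ} (hs : s ∈ dyadicI) : evI (T1 α) s = evI α ((1 + s) / 2) := by
  rw [evI, dif_pos hs]; rfl

def LipE (m : ℚ) (α : X) : Prop :=
  ∀ s t : ℚ, s ∈ dyadicI → t ∈ dyadicI → |evI α s - evI α t| ≤ m * |s - t|

lemma lipE_of {m : ℚ} {α : X} (h : LipschitzQ m α) : LipE m α := by
  intro s t hs ht
  rw [evI, dif_pos hs, evI, dif_pos ht]
  exact h ⟨s, hs⟩ ⟨t, ht⟩

lemma lipE_T0 {m : ℚ} {α : X} (h : LipE m α) : LipE (m / 2) (T0 α) := by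
  intro s t hs ht
  rw [evI_T0 α hs, evI_T0 α ht]
  have := h (s / 2) (t / 2) (half_mem hs) (half_mem ht)
  have habs : |s / 2 - t / 2| = |s - t| / 2 := by
    rw [show s / 2 - t / 2 = (s - t) / 2 by ring, abs_div, abs_two]
  rw [habs] at this
  linarith [this]

lemma lipE_T1 {m : ℚ} {α : X} (h : LipE m α) : LipE (m / 2) (T1 α) := by
  intro s t hs ht
  rw [evI_T1 α hs, evI_T1 α ht]
  have := h ((1 + s) / 2) ((1 + t) / 2) (half_mem' hs) (half_mem' ht)
  have habs : |(1 + s) / 2 - (1 + t) / 2| = |s - t| / 2 := by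
    rw [show (1 + s) / 2 - (1 + t) / 2 = (s - t) / 2 by ring, abs_div, abs_two]
  rw [habs] at this
  linarith [this]

lemma hashAux_succ_eq (n : ℕ) : ∀ (α β : X) (s : ℚ), gridPt n s →
    hashAux (n + 1) α β s = hashAux n α β s := by
  induction n with
  | zero =>
    intro α β s hs
    obtain ⟨i, hi, rfl⟩ := hs
    norm_num at hi
    interval_cases i
    · norm_num [hashAux_succ_def, hashAux_at_zero, hashAux_zero_def]
    · rw [hashAux_succ_def]
      norm_num
      rw [hashAux_zero_def, hashAux_zero_def, hashAux_zero_def, hashAux_zero_def,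
        hashAux_zero_def]
      norm_num
      rw [evI_T0 α one_mem_dyadicI, evI_T0 α zero_mem_dyadicI,
        evI_T0 β one_mem_dyadicI, evI_T0 β zero_mem_dyadicI,
        evI_T1 α one_mem_dyadicI, evI_T1 α zero_mem_dyadicI,
        evI_T1 β one_mem_dyadicI, evI_T1 β zero_mem_dyadicI]
      norm_num
      ring
  | succ n IH =>
    intro α β s hs
    by_cases hs' : s ≤ 1 / 2
    · rw [hashAux_succ_def (n+1), if_pos hs',
        IH (T0 α) (T0 β) _ (gridPt_double hs hs'), IH (T1 α) (T1 β) _ (gridPt_double hs hs'),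
        hashAux_succ_def n, if_pos hs']
    · rw [hashAux_succ_def (n+1), if_neg hs',
        IH (T0 α) (T0 β) _ (gridPt_one n), IH (T1 α) (T1 β) _ (gridPt_one n),
        IH (T0 α) (T1 β) _ (gridPt_double' hs hs'), IH (T1 α) (T0 β) _ (gridPt_double' hs hs'),
        hashAux_succ_def n, if_neg hs']

lemma hashAux_stab {k n : ℕ} (h : k ≤ n) (α β : X) (s : ℚ) (hs : gridPt k s) :
    hashAux n α β s = hashAux k α β s := by
  obtain ⟨d, rfl⟩ := Nat.exists_eq_add_of_le h
  clear h
  induction d with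
  | zero => rfl
  | succ d IH =>
    rw [show k + (d + 1) = (k + d) + 1 from rfl,
      hashAux_succ_eq (k + d) α β s (gridPt_mono (Nat.le_add_right k d) hs), IH]

lemma abs_comb {a a' b b' c d : ℚ} (h1 : |a - a'| ≤ c) (h2 : |b - b'| ≤ c)
    (hc : 2 * c ≤ d) : |a + b - (a' + b')| ≤ d := by
  have h3 := abs_add_le (a - a') (b - b')
  rw [show a - a' + (b - b') = a + b - (a' + b') by ring] at h3
  linarith

lemma abs_comb4 {p q a a' b b' c d : ℚ} (h1 : |a - a'| ≤ c) (h2 : |b - b'| ≤ c)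
    (hc : 2 * c ≤ d) : |p + q + a + b - (p + q + a' + b')| ≤ d := by
  have h3 := abs_add_le (a - a') (b - b')
  rw [show a - a' + (b - b') = p + q + a + b - (p + q + a' + b') by ring] at h3
  linarith

lemma key_lemma : ∀ (n : ℕ) (m : ℚ) (α β : X), 0 ≤ m → LipE m α → LipE m β →
    ∀ s t : ℚ, gridPt n s → gridPt n t →
    |hashAux n α β s - hashAux n α β t| ≤ m ^ 2 * |s - t| := by
  intro n
  induction n with
  | zero =>
    intro m α β hm ha hb s t hs ht
    obtain ⟨i, hi, rfl⟩ := hs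
    obtain ⟨j, hj, rfl⟩ := ht
    norm_num at hi hj
    have h1 := ha 1 0 one_mem_dyadicI zero_mem_dyadicI
    have h2 := hb 1 0 one_mem_dyadicI zero_mem_dyadicI
    norm_num at h1 h2
    have hprod : |(evI α 1 - evI α 0) * (evI β 1 - evI β 0)| ≤ m ^ 2 := by
      rw [abs_mul]
      have := abs_nonneg (evI α 1 - evI α 0)
      have := abs_nonneg (evI β 1 - evI β 0)
      nlinarith
    interval_cases i <;> interval_cases j <;>
      simp [hashAux_zero_def] <;> simpa [abs_mul] using hprod
  | succ n IH =>
    intro m α β hm ha hb s t hs ht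
    have hm2 : 0 ≤ m / 2 := by positivity
    have ha0 := lipE_T0 ha
    have ha1 := lipE_T1 ha
    have hb0 := lipE_T0 hb
    have hb1 := lipE_T1 hb
    -- both in left half
    have left : ∀ u v : ℚ, gridPt (n + 1) u → gridPt (n + 1) v → u ≤ 1 / 2 → v ≤ 1 / 2 →
        |hashAux (n + 1) α β u - hashAux (n + 1) α β v| ≤ m ^ 2 * |u - v| := by
      intro u v hu hv hu' hv'
      have hA := IH (m / 2) (T0 α) (T0 β) hm2 ha0 hb0 (2 * u) (2 * v)
        (gridPt_double hu hu') (gridPt_double hv hv')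
      have hB := IH (m / 2) (T1 α) (T1 β) hm2 ha1 hb1 (2 * u) (2 * v)
        (gridPt_double hu hu') (gridPt_double hv hv')
      have habs : |2 * u - 2 * v| = 2 * |u - v| := by
        rw [show 2 * u - 2 * v = 2 * (u - v) by ring, abs_mul, abs_two]
      rw [habs] at hA hB
      rw [hashAux_succ_def, if_pos hu', hashAux_succ_def, if_pos hv']
      exact abs_comb hA hB (by ring_nf; nlinarith [abs_nonneg (u - v)])
    -- both in right half (strictly)
    have right : ∀ u v : ℚ, gridPt (n + 1) u → gridPt (n + 1) v → ¬ u ≤ 1 / 2 → ¬ v ≤ 1 / 2 →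
        |hashAux (n + 1) α β u - hashAux (n + 1) α β v| ≤ m ^ 2 * |u - v| := by
      intro u v hu hv hu' hv'
      have hC := IH (m / 2) (T0 α) (T1 β) hm2 ha0 hb1 (2 * u - 1) (2 * v - 1)
        (gridPt_double' hu hu') (gridPt_double' hv hv')
      have hD := IH (m / 2) (T1 α) (T0 β) hm2 ha1 hb0 (2 * u - 1) (2 * v - 1)
        (gridPt_double' hu hu') (gridPt_double' hv hv')
      have habs : |2 * u - 1 - (2 * v - 1)| = 2 * |u - v| := by
        rw [show 2 * u - 1 - (2 * v - 1) = 2 * (u - v) by ring, abs_mul, abs_two]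
      rw [habs] at hC hD
      rw [hashAux_succ_def, if_neg hu', hashAux_succ_def, if_neg hv']
      exact abs_comb4 hC hD (by ring_nf; nlinarith [abs_nonneg (u - v)])
    -- distance from a right-half point to 1/2
    have rhalf : ∀ u : ℚ, gridPt (n + 1) u → ¬ u ≤ 1 / 2 →
        |hashAux (n + 1) α β u - hashAux (n + 1) α β (1 / 2)| ≤ m ^ 2 * (u - 1 / 2) := by
      intro u hu hu'
      have hC := IH (m / 2) (T0 α) (T1 β) hm2 ha0 hb1 (2 * u - 1) 0
        (gridPt_double' hu hu') (gridPt_zero n)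
      have hD := IH (m / 2) (T1 α) (T0 β) hm2 ha1 hb0 (2 * u - 1) 0
        (gridPt_double' hu hu') (gridPt_zero n)
      rw [hashAux_at_zero, sub_zero, sub_zero] at hC hD
      have hu1 : (1:ℚ)/2 < u := not_le.mp hu'
      have habs : |2 * u - 1| = 2 * u - 1 := abs_of_nonneg (by linarith)
      rw [habs] at hC hD
      rw [hashAux_succ_def, if_neg hu', hashAux_succ_def, if_pos (le_refl ((1:ℚ)/2))]
      rw [show 2 * ((1:ℚ)/2) = 1 by norm_num]
      have h3 := abs_add_le (hashAux n (T0 α) (T1 β) (2 * u - 1)) (hashAux n (T1 α) (T0 β) (2 * u - 1))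
      rw [show hashAux n (T0 α) (T0 β) 1 + hashAux n (T1 α) (T1 β) 1 +
          hashAux n (T0 α) (T1 β) (2 * u - 1) + hashAux n (T1 α) (T0 β) (2 * u - 1) -
          (hashAux n (T0 α) (T0 β) 1 + hashAux n (T1 α) (T1 β) 1) =
          hashAux n (T0 α) (T1 β) (2 * u - 1) + hashAux n (T1 α) (T0 β) (2 * u - 1) by ring]
      calc |hashAux n (T0 α) (T1 β) (2 * u - 1) + hashAux n (T1 α) (T0 β) (2 * u - 1)|
          ≤ |hashAux n (T0 α) (T1 β) (2 * u - 1)| + |hashAux n (T1 α) (T0 β) (2 * u - 1)| := h3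
        _ ≤ (m / 2) ^ 2 * (2 * u - 1) + (m / 2) ^ 2 * (2 * u - 1) := by linarith
        _ = m ^ 2 * (u - 1 / 2) := by ring
    by_cases hs' : s ≤ 1 / 2 <;> by_cases ht' : t ≤ 1 / 2
    · exact left s t hs ht hs' ht'
    · -- s left, t right
      have h1 := left s (1/2) hs (gridPt_half n) hs' (le_refl _)
      have h2 := rhalf t ht ht'
      have ht1 : (1:ℚ)/2 < t := not_le.mp ht'
      have htri := abs_sub_le (hashAux (n+1) α β s) (hashAux (n+1) α β (1/2)) (hashAux (n+1) α β t)
      have e1 : |s - 1/2| = 1/2 - s := by rw [abs_sub_comm]; exact abs_of_nonneg (by linarith)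
      have e2 : |s - t| = t - s := by rw [abs_sub_comm]; exact abs_of_nonneg (by linarith)
      rw [e1] at h1
      rw [e2]
      rw [abs_sub_comm] at h2
      linarith
    · -- s right, t left
      have h1 := left (1/2) t (gridPt_half n) ht (le_refl _) ht'
      have h2 := rhalf s hs hs'
      have hs1 : (1:ℚ)/2 < s := not_le.mp hs'
      have htri := abs_sub_le (hashAux (n+1) α β s) (hashAux (n+1) α β (1/2)) (hashAux (n+1) α β t)
      have e1 : |1/2 - t| = 1/2 - t := abs_of_nonneg (by linarith)
      have e2 : |s - t| = s - t := abs_of_nonneg (by linarith)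
      rw [e1] at h1
      rw [e2]
      linarith
    · exact right s t hs ht hs' ht'

lemma grid_of_mem (u : dyadicI) : gridPt (padicValNat 2 u.1.den) u.1 := by
  obtain ⟨h0, h1, i, n, he⟩ := u.2
  have hden : u.1.den ∣ 2 ^ n := by
    have h3 : u.1 = Rat.divInt (i : ℤ) ((2 ^ n : ℤ)) := by
      rw [Rat.divInt_eq_div]; push_cast; exact he
    have h4 := Rat.den_dvd (i : ℤ) ((2 ^ n : ℤ))
    rw [← h3] at h4
    exact_mod_cast h4
  obtain ⟨k, hk, hdeq⟩ := (Nat.dvd_prime_pow Nat.prime_two).mp hden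
  have hval : padicValNat 2 u.1.den = k := by rw [hdeq, padicValNat.prime_pow]
  have hnum : 0 ≤ u.1.num := Rat.num_nonneg.mpr h0
  have hdp : (0:ℚ) < (u.1.den : ℚ) := by exact_mod_cast u.1.pos
  have hnd : (u.1.num : ℚ) ≤ (u.1.den : ℚ) := by
    have hh := Rat.num_div_den u.1
    rw [← hh] at h1
    rw [div_le_one hdp] at h1
    exact h1
  have hdq : ((u.1.den : ℚ)) = 2 ^ k := by exact_mod_cast hdeq
  refine ⟨u.1.num.toNat, ?_, ?_⟩
  · rw [hval, ← hdeq]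
    have hz : u.1.num ≤ (u.1.den : ℤ) := by exact_mod_cast hnd
    omega
  · rw [hval, ← hdq,
      show ((u.1.num.toNat : ℕ) : ℚ) = (u.1.num : ℚ) from by
        exact_mod_cast Int.toNat_of_nonneg hnum]
    exact (Rat.num_div_den u.1).symm


/-- Theorem 1.10: if `α` and `β` are Lipschitz with constant `m`,
then `α # β` is Lipschitz with constant `m²`. -/
theorem statement4 (m : ℚ) (α β : X)
    (hα : LipschitzQ m α) (hβ : LipschitzQ m β) :
    LipschitzQ (m ^ 2) (hash α β) := by
  have hm : 0 ≤ m := by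
    have h1 := hα ⟨1, one_mem_dyadicI⟩ ⟨0, zero_mem_dyadicI⟩
    have h2 := abs_nonneg (α ⟨1, one_mem_dyadicI⟩ - α ⟨0, zero_mem_dyadicI⟩)
    norm_num at h1
    linarith
  have ha := lipE_of hα
  have hb := lipE_of hβ
  intro s t
  have hs := grid_of_mem s
  have ht := grid_of_mem t
  set a := padicValNat 2 s.1.den with hadef
  set b := padicValNat 2 t.1.den with hbdef
  have e1 : hash α β s = hashAux (max a b) α β s.1 :=
    (hashAux_stab (le_max_left a b) α β s.1 hs).symm
  have e2 : hash α β t = hashAux (max a b) α β t.1 :=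
    (hashAux_stab (le_max_right a b) α β t.1 ht).symm
  rw [e1, e2]
  exact key_lemma (max a b) m α β hm ha hb s.1 t.1
    (gridPt_mono (le_max_left a b) hs) (gridPt_mono (le_max_right a b) ht)


end
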